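/- Every 2-dimensional nonzero Zinbiel algebra over ℂ with nonzero product is isomorphic to the algebra with basis e₁, e₂ and multiplication e₁e₁ = e₂ (all other products zero). Equivalently: any 2-dimensional complex Zinbiel algebra with a nonzero product has a basis in which the only nonzero product of basis elements is e₁² = e₂. -/

import Mathlib

theorem stmt_17 (A : Type*) [AddCommGroup A] [Module ℂ A]
    (mul : A →ₗ[ℂ] A →ₗ[ℂ] A)
    (hZ : ∀ x y z : A, mul (mul x y) z = mul x (mul y z + mul z y))
    (hdim : Module.finrank ℂ A = 2)
    (hne : ∃ x y : A, mul x y ≠ 0) :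
    ∃ b : Module.Basis (Fin 2) ℂ A,
      mul (b 0) (b 0) = b 1 ∧ mul (b 0) (b 1) = 0 ∧
      mul (b 1) (b 0) = 0 ∧ mul (b 1) (b 1) = 0 := by
  have hfd : FiniteDimensional ℂ A := FiniteDimensional.of_finrank_pos (by omega)
  -- Step 1: there is an element with nonzero square
  have hsq : ∃ x : A, mul x x ≠ 0 := by
    by_contra hcon
    push_neg at hcon
    have anti : ∀ x y : A, mul y x = - mul x y := by
      intro x y
      have h : mul y x + mul x y = 0 := by
        have h2 := hcon (x + y)
        simpa [map_add, LinearMap.add_apply, hcon x, hcon y] using h2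
      exact add_eq_zero_iff_eq_neg.mp h
    have h3 : ∀ x y z : A, mul (mul x y) z = 0 := by
      intro x y z
      rw [hZ]
      rw [anti z y, neg_add_cancel, map_zero]
    obtain ⟨x, y, hxy⟩ := hne
    set c := Module.finBasisOfFinrankEq ℂ A hdim with hc
    set u := c 0 with hu
    set v := c 1 with hv
    have huu : mul u u = 0 := hcon u
    have hvv : mul v v = 0 := hcon v
    have hvu : mul v u = - mul u v := anti u v
    -- show p := mul u v is zero
    have hp0 : mul u v = 0 := by
      set p := mul u v with hp
      have hrep := c.sum_repr p
      rw [Fin.sum_univ_two] at hrep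
      set s := c.repr p 0 with hs
      set t := c.repr p 1 with ht
      have h1 : mul p v = 0 := h3 u v v
      have h2 : mul p u = 0 := h3 u v u
      rw [← hrep] at h1 h2
      have h1' : s • p = 0 := by
        simpa [map_add, map_smul, LinearMap.add_apply, LinearMap.smul_apply, hvv, ← hu, ← hv, ← hp] using h1
      have h2' : t • p = 0 := by
        have h4 : s • mul u u + t • mul v u = 0 := by
          simpa [map_add, map_smul, LinearMap.add_apply, LinearMap.smul_apply] using h2
        rw [huu, hvu] at h4
        simpa using h4
      by_contra hpne
      have hs0 : s = 0 := by
        rcases smul_eq_zero.mp h1' with h | h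
        · exact h
        · exact absurd h hpne
      have ht0 : t = 0 := by
        rcases smul_eq_zero.mp h2' with h | h
        · exact h
        · exact absurd h hpne
      rw [hs0, ht0] at hrep
      simp at hrep
      exact hpne hrep.symm
    have hvu0 : mul v u = 0 := by rw [hvu, hp0, neg_zero]
    apply hxy
    have hx' := c.sum_repr x
    have hy' := c.sum_repr y
    rw [Fin.sum_univ_two] at hx' hy'
    rw [← hx', ← hy']
    simp [map_add, map_smul, LinearMap.add_apply, LinearMap.smul_apply, ← hu, ← hv,
      huu, hvv, hp0, hvu0]
  obtain ⟨x, hx⟩ := hsq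
  set n := mul x x with hn
  have hxx : mul x x = n := rfl
  have hnx : mul n x = mul x n + mul x n := by
    have h := hZ x x x
    rw [hxx] at h
    rw [h, map_add]
  -- Step 2: x, n linearly independent
  have hli : LinearIndependent ℂ ![x, n] := by
    rw [LinearIndependent.pair_iff]
    intro s t hst
    have e1 : s • n + t • mul x n = 0 := by
      have h := congrArg (fun z => mul x z) hst
      simpa [map_add, map_smul, hxx] using h
    have e2 : s • n + (t • mul x n + t • mul x n) = 0 := by
      have h := congrArg (fun z => mul z x) hst
      simp only [map_add, map_smul, LinearMap.add_apply, LinearMap.smul_apply, map_zero,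
        LinearMap.zero_apply, hxx, hnx, smul_add] at h
      simpa [add_assoc] using h
    have etm : t • mul x n = 0 := by
      have h := e2
      rw [show s • n + (t • mul x n + t • mul x n)
          = (s • n + t • mul x n) + t • mul x n by abel, e1, zero_add] at h
      exact h
    have esn : s • n = 0 := by rw [etm, add_zero] at e1; exact e1
    have hs0 : s = 0 := by
      rcases smul_eq_zero.mp esn with h | h
      · exact h
      · exact absurd h hx
    have ht0 : t = 0 := by
      rw [hs0, zero_smul, zero_add] at hst
      rcases smul_eq_zero.mp hst with h | h
      · exact h
      · exact absurd h hx
    exact ⟨hs0, ht0⟩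
  have hli' : ∀ s t : ℂ, s • x + t • n = 0 → s = 0 ∧ t = 0 :=
    LinearIndependent.pair_iff.mp hli
  -- the basis
  have hcard : Fintype.card (Fin 2) = Module.finrank ℂ A := by simp [hdim]
  set b := basisOfLinearIndependentOfCardEqFinrank hli hcard with hbdef
  have hb : ⇑b = ![x, n] := coe_basisOfLinearIndependentOfCardEqFinrank hli hcard
  have hb0 : b 0 = x := by rw [hb]; rfl
  have hb1 : b 1 = n := by rw [hb]; rfl
  -- coordinates of mul x n
  have hrep := b.sum_repr (mul x n)
  rw [Fin.sum_univ_two, hb0, hb1] at hrep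
  obtain ⟨γ, δ, hm⟩ : ∃ γ δ : ℂ, mul x n = γ • x + δ • n := ⟨_, _, hrep.symm⟩
  -- key Zinbiel instance (x, n, x)
  have key : (δ * γ) • x + (δ * δ + 2 * γ) • n = 0 := by
    have h := hZ x n x
    simp only [map_add, map_smul, LinearMap.add_apply, LinearMap.smul_apply, hxx, hnx, hm,
      smul_add, smul_smul] at h
    have h' := sub_eq_zero.mpr h.symm
    rw [← h']
    module
  obtain ⟨h1, h2⟩ := hli' _ _ key
  have hγ0 : γ = 0 := by
    rcases mul_eq_zero.mp h1 with h | h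
    · rw [h] at h2
      have h2' : (2:ℂ) * γ = 0 := by linear_combination h2
      have : (2:ℂ) ≠ 0 := two_ne_zero
      exact (mul_eq_zero.mp h2').resolve_left this
    · exact h
  have hδ0 : δ = 0 := by
    rw [hγ0] at h2
    have hδ2 : δ * δ = 0 := by linear_combination h2
    exact (mul_self_eq_zero).mp hδ2
  have hm0 : mul x n = 0 := by rw [hm, hγ0, hδ0]; simp
  refine ⟨b, ?_, ?_, ?_, ?_⟩
  · rw [hb0, hb1]
  · rw [hb0, hb1]; exact hm0
  · rw [hb0, hb1, hnx, hm0, add_zero]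
  · rw [hb1]
    have h := hZ x x n
    rw [hxx, hnx] at h
    rw [hm0] at h
    simpa using h
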